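/- Let W be a subset of the positive integers and p ≥ 2 an integer with pW ⊆ W, and let R = k[x_i : i ∈ W] be the polynomial ring over the field k in variables indexed by W, graded by deg(x_i) = i. Let > be a monomial order on R such that the leading monomial of x_i^p − x_{pi} is x_i^p for every i ∈ W (for example, the homogeneous anti-reverse lexicographic order). Then G = {x_i^p − x_{pi} : i ∈ W} is a homogeneous regular sequence on R (for any well-ordering of W) and G is a reduced Gröbner base for the ideal GR it generates. -/

import Mathlib

open MvPolynomial

noncomputable section

/-- `r` is a monomial order on the monomials (finitely supported exponent vectors):
a well-order compatible with multiplication.  Here `r a b` means `x^a < x^b`. -/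
def IsMonomialOrder {σ : Type*} (r : (σ →₀ ℕ) → (σ →₀ ℕ) → Prop) : Prop :=
  IsWellOrder (σ →₀ ℕ) r ∧ ∀ a b c : σ →₀ ℕ, r a b → r (c + a) (c + b)

/-- `m` is the leading monomial of the polynomial `f` with respect to the order `r`. -/
def IsLM {σ k : Type*} [CommSemiring k] (r : (σ →₀ ℕ) → (σ →₀ ℕ) → Prop)
    (f : MvPolynomial σ k) (m : σ →₀ ℕ) : Prop :=
  m ∈ f.support ∧ ∀ m' ∈ f.support, m' ≠ m → r m' m

/-- `t` is the leading term of `f` with respect to `r`. -/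
def IsLT {σ k : Type*} [CommSemiring k] (r : (σ →₀ ℕ) → (σ →₀ ℕ) → Prop)
    (f t : MvPolynomial σ k) : Prop :=
  ∃ m, IsLM r f m ∧ t = monomial m (f.coeff m)

/-- The initial ideal of `I`: the ideal generated by the leading terms of nonzero elements. -/
def initialIdeal {σ k : Type*} [CommSemiring k] (r : (σ →₀ ℕ) → (σ →₀ ℕ) → Prop)
    (I : Ideal (MvPolynomial σ k)) : Ideal (MvPolynomial σ k) :=
  Ideal.span {t | ∃ f ∈ I, f ≠ 0 ∧ IsLT r f t}

/-- The set of leading monomials (as polynomials) of the nonzero members of `G`: `in(G)`. -/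
def lmMonomials {σ k : Type*} [CommSemiring k] (r : (σ →₀ ℕ) → (σ →₀ ℕ) → Prop)
    (G : Set (MvPolynomial σ k)) : Set (MvPolynomial σ k) :=
  {t | ∃ m, (∃ g ∈ G, g ≠ 0 ∧ IsLM r g m) ∧ t = monomial m 1}

/-- `G ⊆ I` is a Gröbner base for `I`: the leading monomials of members of `G`
generate the initial ideal of `I`. -/
def IsGroebnerBasis {σ k : Type*} [CommSemiring k] (r : (σ →₀ ℕ) → (σ →₀ ℕ) → Prop)
    (G : Set (MvPolynomial σ k)) (I : Ideal (MvPolynomial σ k)) : Prop :=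
  G ⊆ ↑I ∧ Ideal.span (lmMonomials r G) = initialIdeal r I

/-- `S⟨n⟩ = k[x₀, …, xₙ₋₁]`, the subalgebra of polynomials in the first `n` variables. -/
def Sn (k : Type*) [CommSemiring k] (n : ℕ) : Subalgebra k (MvPolynomial ℕ k) :=
  MvPolynomial.supported k {i | i < n}

/-- The initial ideal of an ideal `J` of `S⟨n⟩`, computed inside `S⟨n⟩`
(with the restricted monomial order). -/
def initialIdealIn {k : Type*} [CommSemiring k] (r : (ℕ →₀ ℕ) → (ℕ →₀ ℕ) → Prop)
    (n : ℕ) (J : Ideal ↥(Sn k n)) : Ideal ↥(Sn k n) :=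
  Ideal.span {t | ∃ f ∈ J, f ≠ 0 ∧ IsLT r (f : MvPolynomial ℕ k) (t : MvPolynomial ℕ k)}

/-- The ideal `I ∩ S⟨n⟩` of `S⟨n⟩`. -/
def interIdeal {k : Type*} [CommSemiring k] (I : Ideal (MvPolynomial ℕ k)) (n : ℕ) :
    Ideal ↥(Sn k n) :=
  Ideal.comap (Sn k n).subtype I

/-- A subset `G` of `S` lying in `S⟨n⟩` is a Gröbner base for the ideal `J` of `S⟨n⟩`. -/
def IsGroebnerBasisIn {k : Type*} [CommSemiring k] (r : (ℕ →₀ ℕ) → (ℕ →₀ ℕ) → Prop)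
    (n : ℕ) (G : Set (MvPolynomial ℕ k)) (J : Ideal ↥(Sn k n)) : Prop :=
  (∀ g ∈ G, ∃ hg : g ∈ Sn k n, (⟨g, hg⟩ : ↥(Sn k n)) ∈ J) ∧
  Ideal.span {t : ↥(Sn k n) | ∃ m, (∃ g ∈ G, g ≠ 0 ∧ IsLM r g m) ∧
      (t : MvPolynomial ℕ k) = monomial m 1} = initialIdealIn r n J

/-- `f'` is a remainder of `f` on division by `G` with respect to the order `r`. -/
def IsRemainder {σ k : Type*} [CommSemiring k] (r : (σ →₀ ℕ) → (σ →₀ ℕ) → Prop)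
    (G : Set (MvPolynomial σ k)) (f f' : MvPolynomial σ k) : Prop :=
  (∃ (s : ℕ) (g q : Fin s → MvPolynomial σ k),
    (∀ i, g i ∈ G) ∧
    f = (∑ i, q i * g i) + f' ∧
    ∀ i, q i * g i ≠ 0 → ∀ m m', IsLM r (q i * g i) m → IsLM r f m' → m = m' ∨ r m m') ∧
  ∀ m ∈ f'.support, (monomial m 1 : MvPolynomial σ k) ∉ Ideal.span (lmMonomials r G)

/-- `G` is a reduced Gröbner base for `I`: every member is monic and no leading monomial
of a member divides any term of another member. -/
def IsReducedGB {σ k : Type*} [CommSemiring k] (r : (σ →₀ ℕ) → (σ →₀ ℕ) → Prop)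
    (G : Set (MvPolynomial σ k)) (I : Ideal (MvPolynomial σ k)) : Prop :=
  IsGroebnerBasis r G I ∧
  (∀ g ∈ G, ∃ m, IsLM r g m ∧ MvPolynomial.coeff m g = 1) ∧
  (∀ g ∈ G, ∀ h ∈ G, g ≠ h → ∀ m, IsLM r g m → ∀ m' ∈ h.support, ¬ m ≤ m')

/-- A regular sequence indexed by an ordered set `(Ω, lt)`. -/
def IsRegularSeq {R : Type*} [CommRing R] {Ω : Type*} (lt : Ω → Ω → Prop) (f : Ω → R) : Prop :=
  Ideal.span (Set.range f) ≠ ⊤ ∧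
  ∀ α : Ω, ∀ h : R, h * f α ∈ Ideal.span (f '' {β | lt β α}) →
    h ∈ Ideal.span (f '' {β | lt β α})

/-- The FR-condition: every finite strictly increasing subfamily is a regular sequence
in this order. -/
def SatisfiesFR {R : Type*} [CommRing R] {Ω : Type*} (lt : Ω → Ω → Prop) (f : Ω → R) : Prop :=
  ∀ (n : ℕ) (α : Fin n → Ω), (∀ i j : Fin n, i < j → lt (α i) (α j)) →
    IsRegularSeq (· < ·) (fun i => f (α i))

namespace PRGB

open scoped Classical

variable {k : Type*} [Field k]

/-- degree of an exponent vector -/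
def deg {σ : Type*} (m : σ →₀ ℕ) : ℕ := m.sum fun _ v => v

lemma deg_add {σ : Type*} (a b : σ →₀ ℕ) : deg (a + b) = deg a + deg b := by
  classical
  exact Finsupp.sum_add_index' (fun _ => rfl) (fun _ _ _ => rfl)

lemma deg_single {σ : Type*} (i : σ) (c : ℕ) : deg (Finsupp.single i c) = c := by
  classical
  exact Finsupp.sum_single_index rfl

/-- The substitution values: `E S n` replaces `x_n` by `x_β ^ p^t` where `n = β p^t`
with the division by `p` done as long as the quotient is in `S`. -/
def E (k : Type*) [Field k] (W : Set ℕ) (p : ℕ)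
    (hW : ∀ w ∈ W, 0 < w) (hp : 2 ≤ p) (S : Set ↥W) (n : ℕ) : MvPolynomial ↥W k :=
  if h : ∃ β : ↥W, β ∈ S ∧ p * ↑β = n then
    (E k W p hW hp S ↑h.choose) ^ p
  else if hn : n ∈ W then MvPolynomial.X ⟨n, hn⟩ else 1
termination_by n
decreasing_by
  obtain ⟨hS, hpn⟩ := h.choose_spec
  have h1 : 0 < (↑h.choose : ℕ) := hW _ h.choose.2
  calc (↑h.choose : ℕ) < 2 * ↑h.choose := by omega
  _ ≤ p * ↑h.choose := Nat.mul_le_mul_right _ hp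
  _ = n := hpn

section ESec

variable {W : Set ℕ} {p : ℕ} (hW : ∀ w ∈ W, 0 < w) (hp : 2 ≤ p) (S : Set ↥W)

lemma E_shape (n : ℕ) (hn : n ∈ W) :
    ∃ (β : ↥W) (t : ℕ), E k W p hW hp S n = X β ^ p ^ t ∧ (↑β : ℕ) * p ^ t = n := by
  induction n using Nat.strong_induction_on with
  | _ n IH =>
    rw [E]
    split
    · next h =>
      have hlt : (↑h.choose : ℕ) < n := by
        obtain ⟨hS, hpn⟩ := h.choose_spec
        have h1 : 0 < (↑h.choose : ℕ) := hW _ h.choose.2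
        calc (↑h.choose : ℕ) < 2 * ↑h.choose := by omega
        _ ≤ p * ↑h.choose := Nat.mul_le_mul_right _ hp
        _ = n := hpn
      obtain ⟨β, t, h1, h2⟩ := IH _ hlt h.choose.2
      refine ⟨β, t + 1, ?_, ?_⟩
      · rw [h1, ← pow_mul, ← pow_succ]
      · rw [pow_succ, ← mul_assoc, h2, mul_comm, h.choose_spec.2]
    · next h =>
      exact ⟨⟨n, hn⟩, 0, by simp, by simp⟩

lemma E_pmul (β : ↥W) (hβ : β ∈ S) :
    E k W p hW hp S (p * ↑β) = (E k W p hW hp S ↑β) ^ p := by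
  have h : ∃ γ : ↥W, γ ∈ S ∧ p * ↑γ = p * ↑β := ⟨β, hβ, rfl⟩
  have hc : h.choose = β := by
    have := h.choose_spec.2
    have hp0 : p ≠ 0 := by omega
    exact Subtype.ext (Nat.eq_of_mul_eq_mul_left (by omega) this)
  conv_lhs => rw [E]
  rw [dif_pos h]
  show (E k W p hW hp S ↑(h.choose)) ^ p = _
  simp only [hc]

lemma E_not (n : ℕ) (hn : n ∈ W) (h : ¬∃ β : ↥W, β ∈ S ∧ p * ↑β = n) :
    E k W p hW hp S n = X ⟨n, hn⟩ := by
  rw [E, dif_neg h, dif_pos hn]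

end ESec

section NuDef

variable {W : Set ℕ} {p : ℕ}

lemma deg_sub_step (hp : 2 ≤ p) (m : ↥W →₀ ℕ) (i j : ↥W) (hi : p ≤ m i) :
    deg ((m - Finsupp.single i p) + Finsupp.single j 1) < deg m := by
  have hle : Finsupp.single i p ≤ m := Finsupp.single_le_iff.2 hi
  have h1 : (m - Finsupp.single i p) + Finsupp.single i p = m := tsub_add_cancel_of_le hle
  have h2 : deg m = deg (m - Finsupp.single i p) + p := by
    conv_lhs => rw [← h1]
    rw [deg_add, deg_single]
  rw [deg_add, deg_single]
  omega


end NuDef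

/-- Reduction of a monomial: replace `x_i^p` by `x_{pi}` as long as possible. -/
def nu (W : Set ℕ) (p : ℕ) (hp : 2 ≤ p) (hpW : ∀ w ∈ W, p * w ∈ W)
    (m : ↥W →₀ ℕ) : ↥W →₀ ℕ :=
  if h : ∃ i : ↥W, p ≤ m i then
    nu W p hp hpW ((m - Finsupp.single h.choose p) +
        Finsupp.single (⟨p * ↑h.choose, hpW _ h.choose.2⟩ : ↥W) 1)
  else m
termination_by deg m
decreasing_by
  exact deg_sub_step hp m h.choose _ h.choose_spec

section NuLemmas

variable {W : Set ℕ} {p : ℕ} (hp : 2 ≤ p) (hpW : ∀ w ∈ W, p * w ∈ W)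

lemma nu_spec (m : ↥W →₀ ℕ) (h : ∃ i : ↥W, p ≤ m i) :
    ∃ (i : ↥W), p ≤ m i ∧ nu W p hp hpW m =
      nu W p hp hpW ((m - Finsupp.single i p) +
        Finsupp.single (⟨p * ↑i, hpW _ i.2⟩ : ↥W) 1) := by
  refine ⟨h.choose, h.choose_spec, ?_⟩
  conv_lhs => rw [nu]
  rw [dif_pos h]

lemma nu_reduced (m : ↥W →₀ ℕ) (h : ∀ i : ↥W, m i < p) : nu W p hp hpW m = m := by
  rw [nu]
  rw [dif_neg]
  push_neg
  exact fun i => h i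

lemma nu_lt (m : ↥W →₀ ℕ) : ∀ i : ↥W, (nu W p hp hpW m) i < p := by
  suffices H : ∀ n (m : ↥W →₀ ℕ), deg m = n → ∀ i : ↥W, (nu W p hp hpW m) i < p from
    H _ m rfl
  intro n
  induction n using Nat.strong_induction_on with
  | _ n IH =>
    rintro m rfl
    by_cases h : ∃ i : ↥W, p ≤ m i
    · obtain ⟨i, hi, heq⟩ := nu_spec hp hpW m h
      rw [heq]
      exact IH _ (deg_sub_step hp m i _ hi) _ rfl
    · push_neg at h
      rw [nu_reduced hp hpW m h]
      exact h

lemma nu_sub_mem (I : Ideal (MvPolynomial ↥W k))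
    (hgI : ∀ (i : ↥W), (X i ^ p - X (⟨p * ↑i, hpW _ i.2⟩ : ↥W) : MvPolynomial ↥W k) ∈ I)
    (m : ↥W →₀ ℕ) :
    (monomial m 1 - monomial (nu W p hp hpW m) 1 : MvPolynomial ↥W k) ∈ I := by
  suffices H : ∀ n (m : ↥W →₀ ℕ), deg m = n →
      (monomial m 1 - monomial (nu W p hp hpW m) 1 : MvPolynomial ↥W k) ∈ I from H _ m rfl
  intro n
  induction n using Nat.strong_induction_on with
  | _ n IH =>
    rintro m rfl
    by_cases h : ∃ i : ↥W, p ≤ m i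
    · obtain ⟨i, hi, heq⟩ := nu_spec hp hpW m h
      set m' := (m - Finsupp.single i p) + Finsupp.single (⟨p * ↑i, hpW _ i.2⟩ : ↥W) 1 with hm'
      have hle : Finsupp.single i p ≤ m := Finsupp.single_le_iff.2 hi
      have h1 : (m - Finsupp.single i p) + Finsupp.single i p = m := tsub_add_cancel_of_le hle
      have eX : (X (⟨p * ↑i, hpW _ i.2⟩ : ↥W) : MvPolynomial ↥W k) =
          monomial (Finsupp.single (⟨p * ↑i, hpW _ i.2⟩ : ↥W) 1) 1 := by
        rw [← X_pow_eq_monomial, pow_one]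
      have e1 : (monomial (m - Finsupp.single i p) (1 : k)) * X i ^ p = monomial m 1 := by
        rw [X_pow_eq_monomial, monomial_mul, mul_one, h1]
      have e2 : (monomial (m - Finsupp.single i p) (1 : k)) *
          X (⟨p * ↑i, hpW _ i.2⟩ : ↥W) = monomial m' 1 := by
        rw [eX, monomial_mul, mul_one, ← hm']
      have step : (monomial m 1 - monomial m' 1 : MvPolynomial ↥W k) =
          monomial (m - Finsupp.single i p) 1 * (X i ^ p - X (⟨p * ↑i, hpW _ i.2⟩ : ↥W)) := by
        rw [mul_sub, e1, e2]
      have hstep : (monomial m 1 - monomial m' 1 : MvPolynomial ↥W k) ∈ I := by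
        rw [step]; exact Ideal.mul_mem_left _ _ (hgI i)
      have hrec : (monomial m' 1 - monomial (nu W p hp hpW m') 1 : MvPolynomial ↥W k) ∈ I :=
        IH _ (deg_sub_step hp m i _ hi) _ rfl
      have := Ideal.add_mem _ hstep hrec
      rw [sub_add_sub_cancel] at this
      rw [heq]
      exact this
    · push_neg at h
      rw [nu_reduced hp hpW m h, sub_self]
      exact Ideal.zero_mem I

lemma nu_r (r : (↥W →₀ ℕ) → (↥W →₀ ℕ) → Prop) (hr : IsMonomialOrder r)
    (hlm : ∀ (i : ↥W) (hpi : (p * ↑i : ℕ) ∈ W),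
      r (Finsupp.single (⟨p * ↑i, hpi⟩ : ↥W) 1) (Finsupp.single i p))
    (m : ↥W →₀ ℕ) : nu W p hp hpW m = m ∨ r (nu W p hp hpW m) m := by
  haveI := hr.1
  suffices H : ∀ n (m : ↥W →₀ ℕ), deg m = n →
      nu W p hp hpW m = m ∨ r (nu W p hp hpW m) m from H _ m rfl
  intro n
  induction n using Nat.strong_induction_on with
  | _ n IH =>
    rintro m rfl
    by_cases h : ∃ i : ↥W, p ≤ m i
    · obtain ⟨i, hi, heq⟩ := nu_spec hp hpW m h
      set m' := (m - Finsupp.single i p) + Finsupp.single (⟨p * ↑i, hpW _ i.2⟩ : ↥W) 1 with hm'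
      have hle : Finsupp.single i p ≤ m := Finsupp.single_le_iff.2 hi
      have h1 : (m - Finsupp.single i p) + Finsupp.single i p = m := tsub_add_cancel_of_le hle
      have hr1 : r m' m := by
        conv_rhs => rw [← h1]
        exact hr.2 _ _ _ (hlm i (hpW _ i.2))
      have hrec := IH _ (deg_sub_step hp m i _ hi) m' rfl
      rw [heq]
      rcases hrec with h2 | h2
      · right; rw [h2]; exact hr1
      · right; exact _root_.trans h2 hr1
    · push_neg at h
      left; exact nu_reduced hp hpW m h

end NuLemmas

section DigitLemmas

lemma digits_lt {p : ℕ} (hp : 2 ≤ p) (n : ℕ) (a : ℕ → ℕ) (ha : ∀ t, a t < p) :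
    ∑ t ∈ Finset.range n, a t * p ^ t < p ^ n := by
  obtain ⟨q, rfl⟩ : ∃ q, p = q + 2 := ⟨p - 2, by omega⟩
  induction n with
  | zero => simp
  | succ n IH =>
    rw [Finset.sum_range_succ, pow_succ]
    have h1 : a n * (q + 2) ^ n ≤ (q + 1) * (q + 2) ^ n :=
      Nat.mul_le_mul_right _ (by have := ha n; omega)
    have h2 : (q + 2) ^ n + (q + 1) * (q + 2) ^ n = (q + 2) ^ n * (q + 2) := by ring
    omega

lemma digits_unique {p : ℕ} (hp : 2 ≤ p) (n : ℕ) (a b : ℕ → ℕ)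
    (ha : ∀ t, a t < p) (hb : ∀ t, b t < p)
    (h : ∑ t ∈ Finset.range n, a t * p ^ t = ∑ t ∈ Finset.range n, b t * p ^ t) :
    ∀ t < n, a t = b t := by
  induction n with
  | zero => omega
  | succ n IH =>
    rw [Finset.sum_range_succ, Finset.sum_range_succ] at h
    have hA := digits_lt hp n a ha
    have hB := digits_lt hp n b hb
    have h2 : 0 < p ^ n := Nat.pow_pos (by omega)
    have han : a n = b n := by
      have e1 : (∑ t ∈ Finset.range n, a t * p ^ t + a n * p ^ n) / p ^ n = a n := by
        rw [Nat.add_mul_div_right _ _ h2, Nat.div_eq_of_lt hA, Nat.zero_add]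
      have e2 : (∑ t ∈ Finset.range n, b t * p ^ t + b n * p ^ n) / p ^ n = b n := by
        rw [Nat.add_mul_div_right _ _ h2, Nat.div_eq_of_lt hB, Nat.zero_add]
      rw [← e1, ← e2, h]
    have h3 : ∑ t ∈ Finset.range n, a t * p ^ t = ∑ t ∈ Finset.range n, b t * p ^ t := by
      rw [han] at h
      omega
    intro t ht
    rcases Nat.lt_succ_iff_lt_or_eq.mp ht with h4 | h4
    · exact IH h3 t h4
    · subst h4; exact han

end DigitLemmas

lemma prod_monomial {σ k ι : Type*} [CommSemiring k] (s : Finset ι) (f : ι → (σ →₀ ℕ)) :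
    (∏ i ∈ s, (monomial (f i) (1 : k))) = monomial (∑ i ∈ s, f i) 1 := by
  classical
  induction s using Finset.induction_on with
  | empty => simp [monomial_zero']
  | insert _ _ h IH =>
    rw [Finset.prod_insert h, Finset.sum_insert h, IH, monomial_mul, one_mul]

lemma Xpow_sub_X_ne {σ k : Type*} [Field k] (b c : σ) (N : ℕ) (hN : 2 ≤ N) :
    (X b ^ N - X c : MvPolynomial σ k) ≠ 0 := by
  classical
  intro h0
  have h1 := congrArg (coeff (Finsupp.single b N)) h0
  rw [coeff_sub, X_pow_eq_monomial, coeff_monomial, if_pos rfl, coeff_X', coeff_zero] at h1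
  by_cases h2 : (Finsupp.single c 1 : σ →₀ ℕ) = Finsupp.single b N
  · have h3 := DFunLike.congr_fun h2 b
    rw [Finsupp.single_apply, Finsupp.single_apply, if_pos rfl] at h3
    split at h3 <;> omega
  · rw [if_neg h2] at h1
    simp at h1

section EMem

variable {k : Type*} [Field k] {W : Set ℕ} {p : ℕ} (hW : ∀ w ∈ W, 0 < w) (hp : 2 ≤ p)
  (S : Set ↥W) (g : ↥W → MvPolynomial ↥W k)
  (hg : ∀ i : ↥W, ∃ hpi : (p * ↑i : ℕ) ∈ W, g i = X i ^ p - X (⟨p * ↑i, hpi⟩ : ↥W))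

include hg in
lemma X_sub_E_mem : ∀ n, ∀ hn : n ∈ W,
    X ⟨n, hn⟩ - E k W p hW hp S n ∈ Ideal.span (g '' S) := by
  intro n
  induction n using Nat.strong_induction_on with
  | _ n IH =>
    intro hn
    by_cases h : ∃ β : ↥W, β ∈ S ∧ p * ↑β = n
    · obtain ⟨β, hβS, hβn⟩ := h
      subst hβn
      rw [E_pmul hW hp S β hβS]
      have hβlt : (↑β : ℕ) < p * ↑β := by
        have h1 := hW _ β.2
        calc (↑β : ℕ) < 2 * ↑β := by omega
        _ ≤ p * ↑β := Nat.mul_le_mul_right _ hp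
      obtain ⟨hpi, hgβ⟩ := hg β
      have hg_mem : g β ∈ Ideal.span (g '' S) := Ideal.subset_span ⟨β, hβS, rfl⟩
      have hIH : X β - E k W p hW hp S ↑β ∈ Ideal.span (g '' S) := IH _ hβlt β.2
      obtain ⟨c, hc⟩ := sub_dvd_pow_sub_pow (X β : MvPolynomial ↥W k) (E k W p hW hp S ↑β) p
      have h2 : (X β : MvPolynomial ↥W k) ^ p - (E k W p hW hp S ↑β) ^ p ∈
          Ideal.span (g '' S) := by
        rw [hc]; exact Ideal.mul_mem_right _ _ hIH
      have h3 : (X (⟨p * ↑β, hn⟩ : ↥W) : MvPolynomial ↥W k) - (X β) ^ p ∈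
          Ideal.span (g '' S) := by
        have he : (X (⟨p * ↑β, hn⟩ : ↥W) : MvPolynomial ↥W k) - (X β) ^ p = -(g β) := by
          rw [hgβ]; ring
        rw [he]; exact neg_mem hg_mem
      have h4 := Ideal.add_mem _ h3 h2
      rw [sub_add_sub_cancel] at h4
      exact h4
    · rw [E_not hW hp S n hn h]
      simp

include hg in
lemma sub_aeval_mem (f : MvPolynomial ↥W k) :
    f - aeval (fun j : ↥W => E k W p hW hp S ↑j) f ∈ Ideal.span (g '' S) := by
  induction f using MvPolynomial.induction_on with
  | C a => rw [aeval_C]; rw [algebraMap_eq]; simp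
  | add f f' hf hf' =>
    rw [map_add, add_sub_add_comm]
    exact Ideal.add_mem _ hf hf'
  | mul_X f j hf =>
    rw [map_mul, aeval_X]
    have key : f * X j - (aeval (fun j : ↥W => E k W p hW hp S ↑j) f) * E k W p hW hp S ↑j =
        (f - aeval (fun j : ↥W => E k W p hW hp S ↑j) f) * X j +
        (aeval (fun j : ↥W => E k W p hW hp S ↑j) f) * (X j - E k W p hW hp S ↑j) := by
      ring
    rw [key]
    exact Ideal.add_mem _ (Ideal.mul_mem_right _ _ hf)
      (Ideal.mul_mem_left _ _ (X_sub_E_mem hW hp S g hg ↑j j.2))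

include hg in
lemma aeval_g_eq_zero (β : ↥W) (hβ : β ∈ S) :
    aeval (fun j : ↥W => E k W p hW hp S ↑j) (g β) = 0 := by
  obtain ⟨hpi, hgβ⟩ := hg β
  rw [hgβ, map_sub, map_pow, aeval_X, aeval_X]
  show (E k W p hW hp S ↑β) ^ p - E k W p hW hp S (p * ↑β) = 0
  rw [E_pmul hW hp S β hβ, sub_self]

end EMem

section MInj

variable {W : Set ℕ} {p : ℕ} (B : ↥W → ↥W) (T : ↥W → ℕ)
  (hBT : ∀ i : ↥W, (↑(B i) : ℕ) * p ^ T i = ↑i) (hp : 2 ≤ p)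

include hBT hp

lemma fiber_subsingleton (s : Finset ↥W) (β : ↥W) (t : ℕ)
    (x y : ↥W) (hx : x ∈ s.filter (fun j => B j = β ∧ T j = t))
    (hy : y ∈ s.filter (fun j => B j = β ∧ T j = t)) : x = y := by
  rw [Finset.mem_filter] at hx hy
  apply Subtype.ext
  rw [← hBT x, ← hBT y, hx.2.1, hx.2.2, hy.2.1, hy.2.2]

lemma digit_lt (m : ↥W →₀ ℕ) (hm : ∀ i, m i < p) (β : ↥W) (t : ℕ) :
    ∑ i ∈ m.support.filter (fun j => B j = β ∧ T j = t), m i < p := by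
  rcases (m.support.filter (fun j => B j = β ∧ T j = t)).eq_empty_or_nonempty with he | ⟨i0, hi0⟩
  · rw [he, Finset.sum_empty]; omega
  · have hs : m.support.filter (fun j => B j = β ∧ T j = t) = {i0} :=
      Finset.eq_singleton_iff_unique_mem.mpr
        ⟨hi0, fun x hx => fiber_subsingleton B T hBT hp _ _ _ x i0 hx hi0⟩
    rw [hs, Finset.sum_singleton]
    exact hm i0

lemma digit_eq (m : ↥W →₀ ℕ) (i : ↥W) :
    ∑ j ∈ m.support.filter (fun j => B j = B i ∧ T j = T i), m j = m i := by
  by_cases hi : i ∈ m.support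
  · have hs : m.support.filter (fun j => B j = B i ∧ T j = T i) = {i} :=
      Finset.eq_singleton_iff_unique_mem.mpr
        ⟨Finset.mem_filter.mpr ⟨hi, rfl, rfl⟩,
         fun x hx => fiber_subsingleton B T hBT hp _ _ _ x i hx
           (Finset.mem_filter.mpr ⟨hi, rfl, rfl⟩)⟩
    rw [hs, Finset.sum_singleton]
  · have hs : m.support.filter (fun j => B j = B i ∧ T j = T i) = ∅ := by
      rw [Finset.eq_empty_iff_forall_notMem]
      intro x hx
      rw [Finset.mem_filter] at hx
      have hxi : x = i := by
        apply Subtype.ext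
        rw [← hBT x, ← hBT i, hx.2.1, hx.2.2]
      exact hi (hxi ▸ hx.1)
    rw [hs, Finset.sum_empty, eq_comm, Finsupp.notMem_support_iff.mp hi]

omit hBT hp in
lemma Msum_apply (m : ↥W →₀ ℕ) (β : ↥W) :
    (m.sum fun i v => Finsupp.single (B i) (p ^ T i * v)) β =
      ∑ i ∈ m.support.filter (fun j => B j = β), p ^ T i * m i := by
  classical
  rw [Finsupp.sum_apply]
  rw [Finsupp.sum]
  rw [Finset.sum_filter]
  apply Finset.sum_congr rfl
  intro i _
  rw [Finsupp.single_apply]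

omit hBT hp in
lemma Msum_digits (m : ↥W →₀ ℕ) (β : ↥W) (n : ℕ) (hn : ∀ i ∈ m.support, T i < n) :
    ∑ i ∈ m.support.filter (fun j => B j = β), p ^ T i * m i =
      ∑ t ∈ Finset.range n, (∑ i ∈ m.support.filter (fun j => B j = β ∧ T j = t), m i) * p ^ t := by
  classical
  rw [← Finset.sum_fiberwise_of_maps_to (g := T) (t := Finset.range n)
    (fun i hi => Finset.mem_range.mpr (hn i (Finset.mem_filter.mp hi).1))
    (fun i => p ^ T i * m i)]
  apply Finset.sum_congr rfl
  intro t _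
  rw [Finset.filter_filter, Finset.sum_mul]
  apply Finset.sum_congr
  · apply Finset.filter_congr
    intro j _
    tauto
  · intro i hi
    rw [Finset.mem_filter] at hi
    rw [hi.2.2, mul_comm]

lemma M_inj (m m' : ↥W →₀ ℕ) (hm : ∀ i, m i < p) (hm' : ∀ i, m' i < p)
    (h : (m.sum fun i v => Finsupp.single (B i) (p ^ T i * v)) =
         (m'.sum fun i v => Finsupp.single (B i) (p ^ T i * v))) : m = m' := by
  classical
  ext i
  by_cases hmem : i ∈ m.support ∪ m'.support
  · set n := ((m.support ∪ m'.support).sup T) + 1 with hn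
    have hTn : ∀ j ∈ m.support ∪ m'.support, T j < n := fun j hj =>
      Nat.lt_succ_of_le (Finset.le_sup hj)
    have hTi : T i < n := hTn i hmem
    have heq : ∑ t ∈ Finset.range n,
        (∑ j ∈ m.support.filter (fun j => B j = B i ∧ T j = t), m j) * p ^ t =
        ∑ t ∈ Finset.range n,
        (∑ j ∈ m'.support.filter (fun j => B j = B i ∧ T j = t), m' j) * p ^ t := by
      rw [← Msum_digits B T m (B i) n (fun j hj => hTn j (Finset.mem_union_left _ hj)),
        ← Msum_digits B T m' (B i) n (fun j hj => hTn j (Finset.mem_union_right _ hj)),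
        ← Msum_apply B T m (B i), ← Msum_apply B T m' (B i), h]
    have hd := digits_unique hp n _ _
      (fun t => digit_lt B T hBT hp m hm (B i) t)
      (fun t => digit_lt B T hBT hp m' hm' (B i) t) heq (T i) hTi
    rw [← digit_eq B T hBT hp m i, ← digit_eq B T hBT hp m' i]
    exact hd
  · rw [Finset.mem_union] at hmem
    push_neg at hmem
    rw [Finsupp.notMem_support_iff.mp hmem.1, Finsupp.notMem_support_iff.mp hmem.2]

end MInj

end PRGB

/-- Theorem 2.1 (first half): let `W ⊆ ℕ_{>0}` with `pW ⊆ W` for an integer `p ≥ 2`, let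
`R = k[x_i : i ∈ W]` graded by `deg x_i = i`, and let the monomial order be such that the
leading monomial of `x_i^p − x_{pi}` is `x_i^p`.  Then `G = {x_i^p − x_{pi} : i ∈ W}` is a
homogeneous regular sequence on `R` (for any well-ordering of `W`) and a reduced Gröbner
base for the ideal it generates. -/
theorem power_relations_reducedGB {k : Type*} [Field k]
    (W : Set ℕ) (hW : ∀ w ∈ W, 0 < w)
    (p : ℕ) (hp : 2 ≤ p) (hpW : ∀ w ∈ W, p * w ∈ W)
    (r : (↥W →₀ ℕ) → (↥W →₀ ℕ) → Prop) (hr : IsMonomialOrder r)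
    (g : ↥W → MvPolynomial ↥W k)
    (hg : ∀ i : ↥W, ∃ hpi : (p * ↑i : ℕ) ∈ W,
      g i = X i ^ p - X (⟨p * ↑i, hpi⟩ : ↥W))
    (hlm : ∀ (i : ↥W) (hpi : (p * ↑i : ℕ) ∈ W),
      r (Finsupp.single (⟨p * ↑i, hpi⟩ : ↥W) 1) (Finsupp.single i p)) :
    (∀ i : ↥W, (g i).IsWeightedHomogeneous (fun j : ↥W => (j : ℕ)) (p * ↑i)) ∧
    (∀ lt : ↥W → ↥W → Prop, IsWellOrder ↥W lt → IsRegularSeq lt g) ∧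
    IsReducedGB r (Set.range g) (Ideal.span (Set.range g))    := by
  classical
  haveI := hr.1
  have hppos : 0 < p := by omega
  have hpi : ∀ i : ↥W, (p * ↑i : ℕ) ∈ W := fun i => hpW ↑i i.2
  have hgi : ∀ i : ↥W, g i = X i ^ p - X (⟨p * ↑i, hpi i⟩ : ↥W) := fun i => (hg i).choose_spec
  have hne : ∀ i : ↥W, (⟨p * ↑i, hpi i⟩ : ↥W) ≠ i := by
    intro i h
    have h2 : (p * ↑i : ℕ) = ↑i := congrArg Subtype.val h
    have h3 := hW ↑i i.2
    have h4 : 2 * ↑i ≤ p * ↑i := Nat.mul_le_mul_right _ hp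
    omega
  have hsne : ∀ i : ↥W, Finsupp.single (⟨p * ↑i, hpi i⟩ : ↥W) 1 ≠ Finsupp.single i p := by
    intro i h
    have h2 := DFunLike.congr_fun h i
    rw [Finsupp.single_apply, Finsupp.single_apply, if_pos rfl, if_neg (hne i)] at h2
    omega
  have hcoeff1 : ∀ i : ↥W, coeff (Finsupp.single i p) (g i) = 1 := by
    intro i
    rw [hgi i, coeff_sub, X_pow_eq_monomial, coeff_monomial, if_pos rfl, coeff_X',
      if_neg (hsne i), sub_zero]
  have hcoeff2 : ∀ i : ↥W,
      coeff (Finsupp.single (⟨p * ↑i, hpi i⟩ : ↥W) 1) (g i) = -1 := by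
    intro i
    rw [hgi i, coeff_sub, X_pow_eq_monomial, coeff_monomial,
      if_neg (fun h => hsne i h.symm), coeff_X', if_pos rfl, zero_sub]
  have hg0 : ∀ i : ↥W, g i ≠ 0 := by
    intro i h
    have h1 := hcoeff1 i
    rw [h, coeff_zero] at h1
    exact one_ne_zero h1.symm
  have hsupp : ∀ (i : ↥W) (m' : ↥W →₀ ℕ), m' ∈ (g i).support →
      m' = Finsupp.single i p ∨ m' = Finsupp.single (⟨p * ↑i, hpi i⟩ : ↥W) 1 := by
    intro i m' hm'
    rw [hgi i] at hm'
    have h1 := support_sub _ _ _ hm'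
    rw [Finset.mem_union, X_pow_eq_monomial, support_monomial, if_neg (one_ne_zero),
      support_X, Finset.mem_singleton, Finset.mem_singleton] at h1
    exact h1
  have hLMg : ∀ i : ↥W, IsLM r (g i) (Finsupp.single i p) := by
    intro i
    constructor
    · rw [mem_support_iff, hcoeff1 i]; exact one_ne_zero
    · intro m' hm' hne'
      rcases hsupp i m' hm' with h1 | h1
      · exact absurd h1 hne'
      · rw [h1]; exact hlm i (hpi i)
  have hLMuniq : ∀ (f : MvPolynomial ↥W k) (m m' : ↥W →₀ ℕ),
      IsLM r f m → IsLM r f m' → m = m' := by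
    intro f m m' h1 h2
    by_contra hne'
    have ha : r m m' := h2.2 m h1.1 hne'
    have hb : r m' m := h1.2 m' h2.1 (Ne.symm hne')
    exact irrefl m (_root_.trans ha hb)
  -- the substitution morphisms
  have hgI' : ∀ i : ↥W,
      (X i ^ p - X (⟨p * ↑i, hpW ↑i i.2⟩ : ↥W) : MvPolynomial ↥W k) ∈
        Ideal.span (Set.range g) := by
    intro i
    rw [← hgi i]
    exact Ideal.subset_span ⟨i, rfl⟩
  refine ⟨?_, ?_, ?_⟩
  · -- Part 1 : weighted homogeneity
    intro i
    rw [hgi i]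
    rw [← mem_weightedHomogeneousSubmodule]
    apply Submodule.sub_mem
    · rw [mem_weightedHomogeneousSubmodule, X_pow_eq_monomial]
      apply isWeightedHomogeneous_monomial
      rw [Finsupp.weight_apply, Finsupp.sum_single_index (by rw [zero_smul]), smul_eq_mul]
    · rw [mem_weightedHomogeneousSubmodule]
      exact isWeightedHomogeneous_X _ _ _
  · -- Part 2 : regular sequence
    intro lt hlt
    haveI := hlt
    constructor
    · -- span ≠ ⊤
      rw [Ne, Ideal.eq_top_iff_one]
      intro h1
      have hker : Ideal.span (Set.range g) ≤
          RingHom.ker (constantCoeff : MvPolynomial ↥W k →+* k) := by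
        rw [Ideal.span_le]
        rintro _ ⟨i, rfl⟩
        rw [SetLike.mem_coe, RingHom.mem_ker, hgi i, map_sub, map_pow, constantCoeff_X,
          constantCoeff_X, zero_pow (by omega : p ≠ 0), sub_zero]
      have h2 := hker h1
      rw [RingHom.mem_ker, map_one] at h2
      exact one_ne_zero h2
    · intro α h hmul
      set S : Set ↥W := {β | lt β α} with hSdef
      set Φ := aeval (R := k) (fun j : ↥W => PRGB.E k W p hW hp S ↑j) with hΦ
      have hker : Ideal.span (g '' S) ≤ RingHom.ker Φ.toRingHom := by
        rw [Ideal.span_le]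
        rintro _ ⟨β, hβ, rfl⟩
        rw [SetLike.mem_coe, RingHom.mem_ker]
        exact PRGB.aeval_g_eq_zero hW hp S g hg β hβ
      have h0 : Φ h * Φ (g α) = 0 := by
        rw [← map_mul]
        exact RingHom.mem_ker.mp (hker hmul)
      have hga : Φ (g α) ≠ 0 := by
        rw [hgi α, map_sub, map_pow, hΦ, aeval_X, aeval_X]
        have hnotin : ¬∃ β : ↥W, β ∈ S ∧ (p * ↑β : ℕ) = (↑(⟨p * ↑α, hpi α⟩ : ↥W) : ℕ) := by
          rintro ⟨β, hβ, hb⟩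
          have hba : β = α := Subtype.ext (Nat.eq_of_mul_eq_mul_left hppos hb)
          rw [hba] at hβ
          exact irrefl α hβ
        have hE2 : PRGB.E k W p hW hp S (↑(⟨p * ↑α, hpi α⟩ : ↥W) : ℕ) =
            X (⟨p * ↑α, hpi α⟩ : ↥W) := by
          rw [PRGB.E_not hW hp S _ (hpi α) hnotin]
        obtain ⟨b, t, hEα, hbt⟩ := PRGB.E_shape (k := k) hW hp S ↑α α.2
        rw [hE2, hEα, ← pow_mul, ← pow_succ]
        exact PRGB.Xpow_sub_X_ne b _ _
          (le_trans hp (Nat.le_self_pow (Nat.succ_ne_zero t) p))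
      have hΦh : Φ h = 0 := by
        rcases mul_eq_zero.mp h0 with h1 | h1
        · exact h1
        · exact absurd h1 hga
      have hmem := PRGB.sub_aeval_mem hW hp S g hg h
      rw [← hΦ] at hmem
      rw [hΦh, sub_zero] at hmem
      exact hmem
  · -- Part 3 : reduced Groebner basis
    set I := Ideal.span (Set.range g) with hIdef
    set Ef : ↥W → MvPolynomial ↥W k := fun j : ↥W => PRGB.E k W p hW hp Set.univ ↑j with hEf
    have hIker : ∀ f ∈ I, aeval (R := k) Ef f = 0 := by
      intro f hf
      have hker : I ≤ RingHom.ker (aeval (R := k) Ef).toRingHom := by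
        rw [hIdef, ← Set.image_univ, Ideal.span_le]
        rintro _ ⟨β, hβ, rfl⟩
        rw [SetLike.mem_coe, RingHom.mem_ker]
        exact PRGB.aeval_g_eq_zero hW hp Set.univ g hg β trivial
      exact RingHom.mem_ker.mp (hker hf)
    choose B T hB1 hB2 using fun i : ↥W => PRGB.E_shape (k := k) hW hp Set.univ ↑i i.2
    have hMono : ∀ (m : ↥W →₀ ℕ) (c : k), aeval (R := k) Ef (monomial m c) =
        monomial (m.sum fun i v => Finsupp.single (B i) (p ^ T i * v)) c := by
      intro m c
      rw [aeval_monomial]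
      have hprod : (m.prod fun i v => Ef i ^ v) =
          monomial (m.sum fun i v => Finsupp.single (B i) (p ^ T i * v)) (1 : k) := by
        rw [Finsupp.prod, Finsupp.sum, ← PRGB.prod_monomial]
        apply Finset.prod_congr rfl
        intro i _
        rw [hEf]
        show (PRGB.E k W p hW hp Set.univ ↑i) ^ m i = _
        rw [hB1 i, ← pow_mul, X_pow_eq_monomial]
      rw [hprod, algebraMap_eq, C_mul_monomial, mul_one]
    have hred0 : ∀ f : MvPolynomial ↥W k, (∀ m ∈ f.support, ∀ i : ↥W, m i < p) →
        aeval (R := k) Ef f = 0 → f = 0 := by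
      intro f hred hf0
      by_contra hne'
      obtain ⟨m₀, hm₀⟩ := support_nonempty.mpr hne'
      have e1 : aeval (R := k) Ef f = ∑ m ∈ f.support,
          monomial (m.sum fun i v => Finsupp.single (B i) (p ^ T i * v)) (coeff m f) := by
        conv_lhs => rw [← support_sum_monomial_coeff f]
        rw [map_sum]
        exact Finset.sum_congr rfl fun m _ => hMono m _
      have e2 := congrArg (coeff (m₀.sum fun i v => Finsupp.single (B i) (p ^ T i * v)))
        (e1.symm.trans hf0)
      rw [coeff_sum, coeff_zero] at e2
      rw [Finset.sum_eq_single m₀ (fun m hm hmne => by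
          rw [coeff_monomial, if_neg]
          intro hMeq
          exact hmne (PRGB.M_inj B T hB2 hp m m₀ (fun i => hred m hm i)
            (fun i => hred m₀ hm₀ i) hMeq))
        (fun hh => absurd hm₀ hh)] at e2
      rw [coeff_monomial, if_pos rfl] at e2
      exact (mem_support_iff.mp hm₀) e2
    have hmain : ∀ f, f ∈ I → ∀ m, IsLM r f m → ∃ i : ↥W, p ≤ m i := by
      intro f hfI m hLM
      by_contra hcon
      push_neg at hcon
      set F2 : MvPolynomial ↥W k :=
        ∑ m' ∈ f.support, monomial (PRGB.nu W p hp hpW m') (coeff m' f) with hF2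
      have hsub : f - F2 ∈ I := by
        have hdiff : f - F2 = ∑ m' ∈ f.support,
            ((monomial m' (coeff m' f) : MvPolynomial ↥W k) -
              monomial (PRGB.nu W p hp hpW m') (coeff m' f)) := by
          rw [hF2, Finset.sum_sub_distrib, support_sum_monomial_coeff]
        rw [hdiff]
        apply Ideal.sum_mem
        intro m' _
        have heq : (monomial m' (coeff m' f) : MvPolynomial ↥W k) -
            monomial (PRGB.nu W p hp hpW m') (coeff m' f) =
            C (coeff m' f) * (monomial m' 1 - monomial (PRGB.nu W p hp hpW m') 1) := by
          rw [mul_sub, C_mul_monomial, C_mul_monomial, mul_one]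
        rw [heq]
        exact Ideal.mul_mem_left _ _ (PRGB.nu_sub_mem hp hpW I hgI' m')
      have hF2I : F2 ∈ I := by
        have h5 := Ideal.sub_mem _ hfI hsub
        rwa [sub_sub_cancel] at h5
      have hF2red : ∀ u ∈ F2.support, ∀ i : ↥W, u i < p := by
        intro u hu i
        rw [hF2] at hu
        have h6 := support_sum hu
        rw [Finset.mem_biUnion] at h6
        obtain ⟨m', _, hu'⟩ := h6
        rw [support_monomial] at hu'
        split at hu'
        · exact absurd hu' (Finset.notMem_empty u)
        · rw [Finset.mem_singleton] at hu'
          rw [hu']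
          exact PRGB.nu_lt hp hpW m' i
      have hF20 : F2 = 0 := hred0 F2 hF2red (hIker F2 hF2I)
      have hcoefm : coeff m F2 = coeff m f := by
        rw [hF2, coeff_sum]
        rw [Finset.sum_eq_single m (fun m' hm' hne' => by
            rw [coeff_monomial, if_neg]
            intro hnueq
            rcases PRGB.nu_r hp hpW r hr hlm m' with h1 | h1
            · exact hne' (h1.symm.trans hnueq)
            · rw [hnueq] at h1
              have h2 : r m' m := hLM.2 m' hm' hne'
              exact irrefl m (_root_.trans h1 h2))
          (fun hh => absurd hLM.1 hh)]
        rw [PRGB.nu_reduced hp hpW m hcon, coeff_monomial, if_pos rfl]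
      rw [hF20, coeff_zero] at hcoefm
      exact (mem_support_iff.mp hLM.1) hcoefm.symm
    refine ⟨⟨fun x hx => Ideal.subset_span hx, ?_⟩, ?_, ?_⟩
    · -- span equality
      apply le_antisymm
      · rw [Ideal.span_le]
        rintro t ⟨m, ⟨g', ⟨i, rfl⟩, hg'0, hLM'⟩, rfl⟩
        have hm : m = Finsupp.single i p := hLMuniq _ _ _ hLM' (hLMg i)
        rw [SetLike.mem_coe]
        refine Ideal.subset_span ⟨g i, Ideal.subset_span ⟨i, rfl⟩, hg0 i,
          Finsupp.single i p, hLMg i, ?_⟩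
        rw [hm, hcoeff1 i]
      · refine Ideal.span_le.mpr ?_
        rintro t ⟨f, hfI, hf0, m, hLMf, rfl⟩
        obtain ⟨i, hi⟩ := hmain f hfI m hLMf
        have hle : Finsupp.single i p ≤ m := Finsupp.single_le_iff.2 hi
        have hfac : (monomial m (coeff m f) : MvPolynomial ↥W k) =
            monomial (m - Finsupp.single i p) (coeff m f) *
              monomial (Finsupp.single i p) 1 := by
          rw [monomial_mul, mul_one, tsub_add_cancel_of_le hle]
        rw [SetLike.mem_coe, hfac]
        exact Ideal.mul_mem_left _ _
          (Ideal.subset_span ⟨Finsupp.single i p, ⟨g i, ⟨i, rfl⟩, hg0 i, hLMg i⟩, rfl⟩)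
    · -- monic
      rintro g' ⟨i, rfl⟩
      exact ⟨Finsupp.single i p, hLMg i, hcoeff1 i⟩
    · -- no division
      rintro g' ⟨i, rfl⟩ h' ⟨j, rfl⟩ hne' m hLM' m' hm' hle
      have hij : i ≠ j := fun hh => hne' (by rw [hh])
      have hm : m = Finsupp.single i p := hLMuniq _ _ _ hLM' (hLMg i)
      subst hm
      have h8 := Finsupp.le_def.mp hle i
      rw [Finsupp.single_apply, if_pos rfl] at h8
      rcases hsupp j m' hm' with h1 | h1 <;> rw [h1] at h8
      · rw [Finsupp.single_apply, if_neg (Ne.symm hij)] at h8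
        omega
      · rw [Finsupp.single_apply] at h8
        split at h8 <;> omega


end
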